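/- arXiv:2605.09071 — 2 statements merged into one kernel-verified Lean document; each statement's English description precedes it below -/
import Mathlib

section
/- Let α, β : ℝ → ℝ with α differentiable, 0 < α(t) < 1 for all t, and α'(t) = −β(t)·α(t). Let E : ℝ → ℝ^d, and let x : ℝ → ℝ^d be differentiable with x'(t) = −(1/2)·β(t) • x(t) + (β(t)/(2·√(1−α(t)))) • E(t) for all t. Then the scaled state x̃(t) = (α(t))^{−1/2} • x(t) is differentiable with x̃'(t) = (β(t)/(2·√(α(t)·(1−α(t))))) • E(t) for all t. -/
/-- Change of variables for the VP-SDE probability-flow ODE: if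
`x'(t) = −(1/2)β(t) • x(t) + (β(t)/(2√(1−α(t)))) • E(t)` and `α'(t) = −β(t)α(t)`
with `0 < α(t) < 1`, then the scaled state `x̃(t) = (α(t))^{−1/2} • x(t)` satisfies
`x̃'(t) = (β(t)/(2√(α(t)(1−α(t))))) • E(t)`. -/
theorem scaled_state_hasDerivAt
    {d : ℕ} (α β : ℝ → ℝ)
    (hα0 : ∀ t, 0 < α t) (hα1 : ∀ t, α t < 1)
    (hα' : ∀ t, HasDerivAt α (-(β t * α t)) t)
    (e x : ℝ → EuclideanSpace ℝ (Fin d))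
    (hx : ∀ t, HasDerivAt x
      ((-(1 / 2 * β t)) • x t + (β t / (2 * Real.sqrt (1 - α t))) • e t) t) :
    ∀ t, HasDerivAt (fun t => (Real.sqrt (α t))⁻¹ • x t)
      ((β t / (2 * Real.sqrt (α t * (1 - α t)))) • e t) t := by
  intro t
  have hαpos := hα0 t
  have hαne : α t ≠ 0 := (hα0 t).ne'
  have hs : Real.sqrt (α t) ≠ 0 := (Real.sqrt_pos.2 hαpos).ne'
  have h1αpos : 0 < 1 - α t := by linarith [hα1 t]
  have hs1 : Real.sqrt (1 - α t) ≠ 0 := (Real.sqrt_pos.2 h1αpos).ne'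
  have hsq : HasDerivAt (fun t => Real.sqrt (α t))
      (-(β t * α t) / (2 * Real.sqrt (α t))) t := by
    have h0 := (Real.hasDerivAt_sqrt hαne).comp t (hα' t)
    convert h0 using 1
    case e'_4 => rfl
    case e'_5 => rfl
    case e'_8 => rfl
    field_simp
  have hinv : HasDerivAt (fun t => (Real.sqrt (α t))⁻¹)
      (-(-(β t * α t) / (2 * Real.sqrt (α t))) / (Real.sqrt (α t))^2) t := hsq.inv hs
  have h := hinv.smul (hx t)
  convert h using 1
  case e'_4 => rfl
  case e'_5 => rfl
  case e'_6 => rfl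
  case e'_8 => rfl
  have hss : Real.sqrt (α t) * Real.sqrt (α t) = α t := Real.mul_self_sqrt hαpos.le
  have hmul : Real.sqrt (α t * (1 - α t)) = Real.sqrt (α t) * Real.sqrt (1 - α t) :=
    Real.sqrt_mul hαpos.le _
  have hc : (Real.sqrt (α t))⁻¹ * -(1 / 2 * β t)
      + (-(-(β t * α t) / (2 * Real.sqrt (α t))) / (Real.sqrt (α t)) ^ 2) = 0 := by
    rw [Real.sq_sqrt hαpos.le]
    field_simp
    ring_nf
  rw [smul_add, smul_smul, smul_smul, add_right_comm, ← add_smul, hc, zero_smul, zero_add]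
  congr 1
  rw [hmul]
  field_simp
end

section
/- Let α, β : ℝ → ℝ with α differentiable, 0 < α(t) < 1 for all t, and α'(t) = −β(t)·α(t). Let E : ℝ → ℝ^d, and let x : ℝ → ℝ^d be differentiable with x'(t) = −(1/2)·β(t) • x(t) + (β(t)/(2·√(1−α(t)))) • E(t) for all t. Define σ(t) = √((1−α(t))/α(t)) and x̃(t) = (α(t))^{−1/2} • x(t). Then for all t, x̃ has derivative x̃'(t) = σ'(t) • E(t), where σ'(t) denotes the derivative of σ at t. -/
/-- The reparameterized DDIM probability-flow ODE: under the VP-SDE PF-ODE dynamics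
`x'(t) = −(1/2)β(t) • x(t) + (β(t)/(2√(1−α(t)))) • E(t)` with `α'(t) = −β(t)α(t)`
and `0 < α(t) < 1`, the scaled state `x̃(t) = (α(t))^{−1/2} • x(t)` satisfies
`x̃'(t) = σ'(t) • E(t)`, where `σ(t) = √((1−α(t))/α(t))`. -/
theorem scaled_state_hasDerivAt_deriv_snr_smul
    {d : ℕ} (α β : ℝ → ℝ)
    (hα0 : ∀ t, 0 < α t) (hα1 : ∀ t, α t < 1)
    (hα' : ∀ t, HasDerivAt α (-(β t * α t)) t)
    (e x : ℝ → EuclideanSpace ℝ (Fin d))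
    (hx : ∀ t, HasDerivAt x
      ((-(1 / 2 * β t)) • x t + (β t / (2 * Real.sqrt (1 - α t))) • e t) t)
    (σ : ℝ → ℝ) (hσ : ∀ t, σ t = Real.sqrt ((1 - α t) / α t)) :
    ∀ t, HasDerivAt (fun t => (Real.sqrt (α t))⁻¹ • x t) (deriv σ t • e t) t := by
  intro t
  have hαpos := hα0 t
  have h1α : (0:ℝ) < 1 - α t := by linarith [hα1 t]
  have hsa : (0:ℝ) < Real.sqrt (α t) := Real.sqrt_pos.2 hαpos
  have hs1 : (0:ℝ) < Real.sqrt (1 - α t) := Real.sqrt_pos.2 h1α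
  have hsq : Real.sqrt (α t) ^ 2 = α t := Real.sq_sqrt hαpos.le
  have hsq1 : Real.sqrt (1 - α t) ^ 2 = 1 - α t := Real.sq_sqrt h1α.le
  -- derivative of σ
  have hquot : HasDerivAt (fun t => (1 - α t) / α t)
      ((β t * α t * α t - (1 - α t) * (-(β t * α t))) / (α t)^2) t := by
    have h1 : HasDerivAt (fun t => 1 - α t) (β t * α t) t := by
      have h2 : HasDerivAt (fun t => 1 - α t) (0 - -(β t * α t)) t :=
        (hasDerivAt_const t (1:ℝ)).sub (hα' t)
      convert h2 using 1
      ring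
    exact h1.div (hα' t) hαpos.ne'
  have hfrac : (0:ℝ) < (1 - α t) / α t := div_pos h1α hαpos
  have hσder : HasDerivAt σ
      (((β t * α t * α t - (1 - α t) * (-(β t * α t))) / (α t)^2) /
        (2 * Real.sqrt ((1 - α t) / α t))) t := by
    have h := hquot.sqrt hfrac.ne'
    have hfun : σ = fun t => Real.sqrt ((1 - α t) / α t) := funext hσ
    rw [hfun]; exact h
  have hderivσ : deriv σ t = β t / (2 * Real.sqrt (α t) * Real.sqrt (1 - α t)) := by
    rw [hσder.deriv, Real.sqrt_div h1α.le]
    field_simp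
    linear_combination (β t) * hsq
  -- derivative of the scaling factor
  have hc : HasDerivAt (fun t => (Real.sqrt (α t))⁻¹)
      (-((-(β t * α t)) / (2 * Real.sqrt (α t))) / (Real.sqrt (α t))^2) t :=
    ((hα' t).sqrt hαpos.ne').inv hsa.ne'
  have hmain := hc.smul (hx t)
  have key : ((Real.sqrt (α t))⁻¹ : ℝ) • ((-(1 / 2 * β t)) • x t +
      (β t / (2 * Real.sqrt (1 - α t))) • e t) +
      (-((-(β t * α t)) / (2 * Real.sqrt (α t))) / (Real.sqrt (α t))^2) • x t
      = deriv σ t • e t := by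
    rw [hderivσ, smul_add, smul_smul, smul_smul, add_assoc, add_comm]
    have h0 : (Real.sqrt (α t))⁻¹ * (-(1 / 2 * β t)) +
        (-((-(β t * α t)) / (2 * Real.sqrt (α t))) / (Real.sqrt (α t))^2) = 0 := by
      field_simp
      rw [hsq]; ring
    have h1 : (Real.sqrt (α t))⁻¹ * (β t / (2 * Real.sqrt (1 - α t))) =
        β t / (2 * Real.sqrt (α t) * Real.sqrt (1 - α t)) := by
      rw [inv_mul_eq_div, div_div]; ring_nf
    rw [h1, add_assoc, ← add_smul,
      show -(-(β t * α t) / (2 * Real.sqrt (α t))) / Real.sqrt (α t) ^ 2 +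
        (Real.sqrt (α t))⁻¹ * -(1 / 2 * β t) = 0 from by linarith [h0],
      zero_smul, add_zero]
  rw [key] at hmain
  exact hmain
end
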